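/- If Q > 0, then there exists a feasible tuple x* ∈ F with G_b* = 0 and R_b* = 0 such that f(x*) ≤ f(x) for every x ∈ F; that is, problem P3 admits an optimal solution with no charging from either the grid or the renewable source. -/
import Mathlib


/-- The feasible set of problem P3. -/
def P3Feasible (R E Cchar Cdis : ℝ) (Re Rb Ge Gb Be : ℝ) : Prop :=
  0 ≤ Gb + Rb ∧ Gb + Rb ≤ Cchar ∧ 0 ≤ Gb ∧ 0 ≤ Rb ∧
  0 ≤ Be ∧ Be ≤ Cdis ∧ 0 ≤ Re + Rb ∧ Re + Rb ≤ R ∧ 0 ≤ Re ∧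
  E = Re + Be + Ge ∧ 0 ≤ Ge ∧ (Gb + Rb) * Be = 0

/-- The objective function of problem P3. -/
noncomputable def P3Obj (P V Q : ℝ) (Re Rb Ge Gb Be : ℝ) : ℝ :=
  (Q + V * P) * Gb + Q * Rb - (Q + V * P) * Be - V * P * Re

/-- If `Q > 0`, problem P3 admits an optimal solution with no
charging from either the grid or the renewable source. -/
theorem p3_optimal_no_charge
    (R E P V Q Cchar Cdis : ℝ)
    (hR : 0 ≤ R) (hE : 0 ≤ E) (hP : 0 ≤ P) (hV : 0 < V)
    (hCchar : 0 ≤ Cchar) (hCdis : 0 ≤ Cdis)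
    (hQ : 0 < Q) :
    ∃ Re Rb Ge Gb Be : ℝ,
      P3Feasible R E Cchar Cdis Re Rb Ge Gb Be ∧ Gb = 0 ∧ Rb = 0 ∧
      ∀ Re' Rb' Ge' Gb' Be' : ℝ,
        P3Feasible R E Cchar Cdis Re' Rb' Ge' Gb' Be' →
        P3Obj P V Q Re Rb Ge Gb Be ≤ P3Obj P V Q Re' Rb' Ge' Gb' Be' := by
  set Be := min Cdis E with hBe
  set Re := min R (E - Be) with hRe
  have hBe0 : 0 ≤ Be := le_min hCdis hE
  have hBeE : Be ≤ E := min_le_right _ _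
  have hBeC : Be ≤ Cdis := min_le_left _ _
  have hRe0 : 0 ≤ Re := le_min hR (by linarith)
  have hReR : Re ≤ R := min_le_left _ _
  have hReEB : Re ≤ E - Be := min_le_right _ _
  refine ⟨Re, 0, E - Re - Be, 0, Be, ?_, rfl, rfl, ?_⟩
  · refine ⟨by norm_num, by simpa using hCchar, le_refl _, le_refl _, hBe0, hBeC,
      by simpa using hRe0, by simpa using hReR, hRe0, by ring, by linarith, by ring⟩
  · rintro Re' Rb' Ge' Gb' Be' ⟨h1, h2, h3, h4, h5, h6, h7, h8, h9, h10, h11, h12⟩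
    simp only [P3Obj]
    have hVP : 0 ≤ V * P := mul_nonneg hV.le hP
    have hsum : Re' + Be' ≤ E := by linarith
    -- key: (Q+VP)*Be + VP*Re ≥ (Q+VP)*Be' + VP*Re'
    have key : (Q + V * P) * Be' + V * P * Re' ≤ (Q + V * P) * Be + V * P * Re := by
      rcases min_cases Cdis E with ⟨hb, hle⟩ | ⟨hb, hle⟩
      · -- Be = Cdis, so Be' ≤ Be
        have hBe' : Be' ≤ Be := by rw [← hBe] at hb; linarith
        rcases min_cases R (E - Be) with ⟨hr, _⟩ | ⟨hr, hrle⟩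
        · have : Re' ≤ Re := by rw [← hRe] at hr; linarith
          nlinarith
        · rw [← hRe] at hr
          nlinarith
      · -- Be = E
        have hBeeq : Be = E := by rw [hBe, hb]
        have hReeq : Re = 0 := by
          rw [hRe, hBeeq]; simp [hR]
        rw [hBeeq, hReeq]
        nlinarith
    nlinarith [mul_nonneg (by linarith : (0:ℝ) ≤ Q + V * P) h3, mul_nonneg hQ.le h4]
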